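/- Suppose x ∈ R^N is k-sparse and there exists q with 1 < q < ∞ such that k < 2^{q/(1-q)} s_q(z) for all nonzero z in the kernel of A ∈ R^{m×N}. Then x is the unique minimizer of ‖z‖₁ subject to Az = Ax. -/

import Mathlib

open Finset Matrix

noncomputable def l1 {N : ℕ} (z : Fin N → ℝ) : ℝ := ∑ i, |z i|
noncomputable def lq {N : ℕ} (q : ℝ) (z : Fin N → ℝ) : ℝ := (∑ i, |z i| ^ q) ^ (1/q)
noncomputable def l2 {m : ℕ} (v : Fin m → ℝ) : ℝ := Real.sqrt (∑ i, (v i)^2)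
noncomputable def linf {N : ℕ} (z : Fin N → ℝ) : ℝ := ⨆ i, |z i|
open scoped Classical in
noncomputable def l0 {N : ℕ} (z : Fin N → ℝ) : ℕ := (Finset.univ.filter (fun i => z i ≠ 0)).card
noncomputable def sparsityQ {N : ℕ} (q : ℝ) (z : Fin N → ℝ) : ℝ := (l1 z / lq q z) ^ (q/(q-1))
noncomputable def cmsv {m N : ℕ} (q s : ℝ) (A : Matrix (Fin m) (Fin N) ℝ) : ℝ :=
  sInf { r | ∃ z : Fin N → ℝ, z ≠ 0 ∧ sparsityQ q z ≤ s ∧ r = l2 (A.mulVec z) / lq q z }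

theorem stmt4 {m N k : ℕ} (A : Matrix (Fin m) (Fin N) ℝ) (x : Fin N → ℝ)
    (hx : l0 x ≤ k) (q : ℝ) (hq : 1 < q)
    (hker : ∀ z : Fin N → ℝ, z ≠ 0 → A.mulVec z = 0 →
      (k : ℝ) < (2:ℝ) ^ (q/(1-q)) * sparsityQ q z) :
    ∀ z : Fin N → ℝ, A.mulVec z = A.mulVec x → z ≠ x → l1 x < l1 z := by
  classical
  intro z hAz hzx
  set h : Fin N → ℝ := z - x with hhdef
  have hne : h ≠ 0 := sub_ne_zero.mpr hzx
  have hAh : A.mulVec h = 0 := by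
    simp [hhdef, Matrix.mulVec_sub, hAz]
  have hk := hker h hne hAh
  have hq0 : 0 < q := lt_trans one_pos hq
  have hq1 : 0 < q - 1 := sub_pos.mpr hq
  set r : ℝ := q / (q - 1) with hrdef
  have hr0 : 0 < r := div_pos hq0 hq1
  obtain ⟨i0, hi0⟩ : ∃ i, h i ≠ 0 := by
    by_contra hc; push_neg at hc; exact hne (funext hc)
  have hsum_pos : 0 < ∑ i, |h i| ^ q := by
    apply Finset.sum_pos' (fun i _ => Real.rpow_nonneg (abs_nonneg _) q)
    exact ⟨i0, Finset.mem_univ _, Real.rpow_pos_of_pos (abs_pos.mpr hi0) q⟩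
  have hLq_pos : 0 < lq q h := Real.rpow_pos_of_pos hsum_pos _
  have hL1_nonneg : 0 ≤ l1 h := Finset.sum_nonneg fun i _ => abs_nonneg _
  have h2 : (2:ℝ) ^ (q/(1-q)) = ((2:ℝ) ^ r)⁻¹ := by
    rw [← Real.rpow_neg (by norm_num : (0:ℝ) ≤ 2)]
    congr 1
    rw [hrdef, ← div_neg, neg_sub]
  have hk' : (k:ℝ) * 2 ^ r < (l1 h / lq q h) ^ r := by
    rw [h2, sparsityQ] at hk
    have h2r : (0:ℝ) < 2 ^ r := Real.rpow_pos_of_pos two_pos r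
    calc (k:ℝ) * 2 ^ r < ((2:ℝ)^r)⁻¹ * (l1 h / lq q h) ^ r * 2 ^ r :=
          mul_lt_mul_of_pos_right hk h2r
      _ = (l1 h / lq q h) ^ r := by field_simp
  have hratio_nonneg : 0 ≤ l1 h / lq q h := div_nonneg hL1_nonneg hLq_pos.le
  have hroot : 2 * (k:ℝ) ^ (1/r) * lq q h < l1 h := by
    have h1 := Real.rpow_lt_rpow (by positivity) hk' (by positivity : 0 < 1/r)
    rw [← Real.rpow_mul hratio_nonneg, mul_one_div_cancel hr0.ne', Real.rpow_one,
        Real.mul_rpow (Nat.cast_nonneg k) (by positivity),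
        ← Real.rpow_mul (by norm_num : (0:ℝ) ≤ 2), mul_one_div_cancel hr0.ne',
        Real.rpow_one] at h1
    calc 2 * (k:ℝ) ^ (1/r) * lq q h = ((k:ℝ)^(1/r) * 2) * lq q h := by ring
      _ < (l1 h / lq q h) * lq q h := mul_lt_mul_of_pos_right h1 hLq_pos
      _ = l1 h := div_mul_cancel₀ _ hLq_pos.ne'
  -- support set
  set S : Finset (Fin N) := Finset.univ.filter (fun i => x i ≠ 0) with hSdef
  have hScard : S.card ≤ k := by
    have : l0 x = S.card := by rw [l0, hSdef]
    omega
  -- Hölder on S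
  have hconj : Real.HolderConjugate r q := by
    exact ((Real.holderConjugate_iff_eq_conjExponent hq).mpr hrdef).symm
  have holder : ∑ i ∈ S, |h i| ≤ (S.card : ℝ) ^ (1/r) * (∑ i ∈ S, |h i| ^ q) ^ (1/q) := by
    have := Real.inner_le_Lp_mul_Lq_of_nonneg (s := S) (f := fun _ => (1:ℝ))
      (g := fun i => |h i|) hconj (fun i _ => zero_le_one) (fun i _ => abs_nonneg _)
    simpa [Real.one_rpow] using this
  have hsub : (∑ i ∈ S, |h i| ^ q) ≤ ∑ i, |h i| ^ q :=
    Finset.sum_le_sum_of_subset_of_nonneg (Finset.subset_univ S)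
      (fun i _ _ => Real.rpow_nonneg (abs_nonneg _) q)
  have hA : ∑ i ∈ S, |h i| ≤ (k:ℝ) ^ (1/r) * lq q h := by
    refine holder.trans (mul_le_mul ?_ ?_ (by positivity) (by positivity))
    · exact Real.rpow_le_rpow (by positivity) (by exact_mod_cast hScard) (by positivity)
    · exact Real.rpow_le_rpow (Finset.sum_nonneg fun i _ => Real.rpow_nonneg (abs_nonneg _) q)
        hsub (by positivity)
  have hAlt : 2 * ∑ i ∈ S, |h i| < l1 h := by
    calc 2 * ∑ i ∈ S, |h i| ≤ 2 * ((k:ℝ) ^ (1/r) * lq q h) := by linarith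
      _ = 2 * (k:ℝ) ^ (1/r) * lq q h := by ring
      _ < l1 h := hroot
  -- final
  have hsplit : l1 z ≥ l1 x + l1 h - 2 * ∑ i ∈ S, |h i| := by
    have hzx' : ∀ i, z i = x i + h i := by intro i; simp [hhdef]
    have e1 : l1 z = ∑ i ∈ S, |z i| + ∑ i ∈ Sᶜ, |z i| :=
      (Finset.sum_add_sum_compl S _).symm
    have e2 : l1 x = ∑ i ∈ S, |x i| := by
      rw [l1, ← Finset.sum_add_sum_compl S (fun i => |x i|)]
      have : ∑ i ∈ Sᶜ, |x i| = 0 := by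
        apply Finset.sum_eq_zero
        intro i hi
        simp [hSdef] at hi
        simp [hi]
      linarith
    have e3 : l1 h = ∑ i ∈ S, |h i| + ∑ i ∈ Sᶜ, |h i| :=
      (Finset.sum_add_sum_compl S _).symm
    have e4 : ∑ i ∈ Sᶜ, |z i| = ∑ i ∈ Sᶜ, |h i| := by
      apply Finset.sum_congr rfl
      intro i hi
      simp [hSdef] at hi
      rw [hzx' i, hi]; simp
    have e5 : ∑ i ∈ S, |x i| - ∑ i ∈ S, |h i| ≤ ∑ i ∈ S, |z i| := by
      rw [← Finset.sum_sub_distrib]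
      apply Finset.sum_le_sum
      intro i _
      rw [hzx' i]
      have := abs_add_le (x i + h i) (-h i)
      simp at this
      linarith [abs_neg (h i) ▸ this]
    rw [e1, e4, e2, e3]
    linarith
  linarith
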